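/- Every Kripke frame that validates the van Benthem axiom □◇⊤ → □(□(□p → p) → p) also validates □◇⊤ → □⊥. Equivalently: in a Kripke frame ⟨W,R⟩ where the van Benthem axiom is valid, for every x ∈ W with R(x) ≠ ∅ there exists w ∈ R(x) with R(w) = ∅. -/
import Mathlib

/-- Every Kripke frame validating the van Benthem axiom
`□◇⊤ → □(□(□p → p) → p)` also validates `□◇⊤ → □⊥`: for every `x` with a
successor there is a successor of `x` with no successors. -/
theorem stmt_10 {W : Type*} (R : W → W → Prop)
    (hvB : ∀ (P : W → Prop) (w : W),
      (∀ v, R w v → ∃ u, R v u) →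
      ∀ v, R w v →
        ((∀ u, R v u → ((∀ t, R u t → P t) → P u)) → P v)) :
    ∀ x : W, (∃ y, R x y) → ∃ w, R x w ∧ ∀ u, ¬ R w u := by
  intro x ⟨y, hy⟩
  by_contra h
  push_neg at h
  have h1 := hvB (fun v => ¬ R x v) x h
  have key : ¬ (∀ u, R y u → ((∀ t, R u t → ¬ R x t) → ¬ R x u)) := by
    intro hant
    exact h1 y hy hant hy
  push_neg at key
  obtain ⟨u, hyu, hut, hxu⟩ := key
  exact h1 u hxu (fun w hw _ => hut w hw) hxu
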